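/- arXiv:1211.0269 — 4 statements merged into one kernel-verified Lean document; each statement's English description precedes it below -/
import Mathlib

section
/- For a closed spin 8-manifold X with signature σ(X) and first spin Pontryagin square p_X² = ⟨p_X ∪ p_X,[X]⟩, one has p_X² − σ(X) = 224·Â(X). Consequently, if σ(X) = 0 (e.g. X a mapping torus) then 224 divides p_X². -/
/-- For a closed spin 8-manifold with half-Pontryagin class `p` (so `p₁ = 2p`),
signature `σ = ∫L = (7p₂ − p₁²)/45` and `Â = (7p₁² − 4p₂)/5760`, one has
`p² − σ = 224·Â`; consequently, if `σ = 0` (e.g. a mapping torus) then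
`224 ∣ p²`. -/
theorem p_sq_sub_sigma_eq_224_Ahat (p σ A : ℤ) (p2 : ℚ)
    (hA : (A : ℚ) = (7 * ((2 * p : ℤ) : ℚ) ^ 2 - 4 * p2) / 5760)
    (hσ : (σ : ℚ) = (7 * p2 - ((2 * p : ℤ) : ℚ) ^ 2) / 45) :
    p ^ 2 - σ = 224 * A ∧ (σ = 0 → (224 : ℤ) ∣ p ^ 2) := by
  have key : p ^ 2 - σ = 224 * A := by
    have : ((p ^ 2 - σ : ℤ) : ℚ) = ((224 * A : ℤ) : ℚ) := by
      push_cast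
      field_simp at hA hσ ⊢
      push_cast at hA hσ
      linarith
    exact_mod_cast this
  exact ⟨key, fun h => ⟨A, by linarith⟩⟩
end

section
/- Let W be a 4-manifold-datum with Euler characteristic χ(W) and semicharacteristic χ₂(Y) of its boundary, and suppose (i) χ(W) ≡ dim H²₀(W;𝔽₂) + χ₂(Y) mod 2 (from the exact sequence), and (ii) H²₀(W;𝔽₂) carries a nondegenerate even symmetric 𝔽₂-bilinear form. Then χ(W) ≡ χ₂(Y) mod 2. -/
open Module LinearMap

private lemma even_finrank_of_alt_nondeg (K : Type*) [Field K] :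
    ∀ (n : ℕ) (V : Type*) [AddCommGroup V] [Module K V] [FiniteDimensional K V]
      (B : LinearMap.BilinForm K V), finrank K V = n → B.IsAlt → B.Nondegenerate →
      Even n := by
  intro n
  induction n using Nat.strong_induction_on with
  | _ n ih =>
    intro V _ _ _ B hn halt hnd
    rcases Nat.eq_zero_or_pos n with h0 | hpos
    · simp [h0]
    have hVnt : Nontrivial V := by
      rw [← Module.finrank_pos_iff (R := K)]; omega
    obtain ⟨x, hx⟩ := exists_ne (0 : V)
    obtain ⟨y, hy⟩ : ∃ y, B x y ≠ 0 := by
      by_contra h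
      push_neg at h
      exact hx (hnd.1 x h)
    have hrefl : B.IsRefl := halt.isRefl
    have hyx : B y x ≠ 0 := fun h => hy (hrefl y x h)
    have li : LinearIndependent K ![x, y] := by
      rw [LinearIndependent.pair_iff]
      intro s t hst
      have h1 : B x (s • x + t • y) = 0 := by rw [hst]; simp
      have h2 : B y (s • x + t • y) = 0 := by rw [hst]; simp
      simp only [map_add, map_smul, smul_eq_mul, halt x, halt y, mul_zero, zero_add,
        add_zero] at h1 h2
      constructor
      · rcases mul_eq_zero.mp h2 with h | h
        · exact h
        · exact absurd h hyx
      · rcases mul_eq_zero.mp h1 with h | h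
        · exact h
        · exact absurd h hy
    set W : Submodule K V := Submodule.span K (Set.range ![x, y]) with hW
    have hxW : x ∈ W := Submodule.subset_span ⟨0, rfl⟩
    have hyW : y ∈ W := Submodule.subset_span ⟨1, rfl⟩
    have hWrank : finrank K W = 2 := by
      rw [hW, finrank_span_eq_card li]
      simp
    have hres : (B.restrict W).Nondegenerate := by
      refine (LinearMap.IsRefl.nondegenerate_iff_separatingLeft (B := B.restrict W) (fun a b h => hrefl _ _ h)).mpr ?_
      rintro ⟨z, hz⟩ h
      have hzx : B z x = 0 := h ⟨x, hxW⟩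
      have hzy : B z y = 0 := h ⟨y, hyW⟩
      rw [hW] at hz
      have : Set.range ![x, y] = ({x, y} : Set V) := by
        ext v; simp [Fin.exists_fin_two]; tauto
      rw [this, Submodule.mem_span_pair] at hz
      obtain ⟨s, t, rfl⟩ := hz
      simp only [map_add, LinearMap.add_apply, map_smul, LinearMap.smul_apply, smul_eq_mul,
        halt x, halt y, mul_zero, zero_add, add_zero] at hzx hzy
      have hs : s = 0 := by
        rcases mul_eq_zero.mp hzy with h' | h'
        · exact h'
        · exact absurd h' hy
      have ht : t = 0 := by
        rcases mul_eq_zero.mp hzx with h' | h'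
        · exact h'
        · exact absurd h' hyx
      simp [hs, ht]
    have hcompl : IsCompl W (B.orthogonal W) :=
      B.isCompl_orthogonal_of_restrict_nondegenerate hrefl hres
    have hrank : finrank K W + finrank K (B.orthogonal W) = n := by
      rw [← hn, Submodule.finrank_add_eq_of_isCompl hcompl]
    have hdis : Disjoint (B.orthogonal W) (B.orthogonal (B.orthogonal W)) := by
      rw [BilinForm.orthogonal_orthogonal hnd hrefl]
      exact hcompl.symm.disjoint
    have hres' : (B.restrict (B.orthogonal W)).Nondegenerate :=
      B.nondegenerate_restrict_of_disjoint_orthogonal hrefl hdis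
    have halt' : (B.restrict (B.orthogonal W)).IsAlt := fun z => halt z
    have hlt : finrank K (B.orthogonal W) < n := by omega
    have hev : Even (finrank K (B.orthogonal W)) :=
      ih _ hlt (B.orthogonal W) (B.restrict (B.orthogonal W)) rfl halt' hres'
    obtain ⟨k, hk⟩ := hev
    exact ⟨k + 1, by omega⟩

/-- Lemma 4.2: if `χ(W) ≡ dim H²₀(W;𝔽₂) + χ₂(Y) (mod 2)` and `H²₀(W;𝔽₂)`
carries a nondegenerate even symmetric 𝔽₂-bilinear form, then
`χ(W) ≡ χ₂(Y) (mod 2)`. -/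
theorem chi_congr_semichar_mod_two (χ χ₂ : ℤ)
    {V : Type*} [AddCommGroup V] [Module (ZMod 2) V]
    [FiniteDimensional (ZMod 2) V]
    (B : V →ₗ[ZMod 2] V →ₗ[ZMod 2] ZMod 2)
    (hsymm : ∀ x y : V, B x y = B y x)
    (halt : ∀ x : V, B x x = 0)
    (hnondeg : ∀ x : V, (∀ y : V, B x y = 0) → x = 0)
    (hparity : χ ≡ (Module.finrank (ZMod 2) V : ℤ) + χ₂ [ZMOD 2]) :
    χ ≡ χ₂ [ZMOD 2] := by
  have hev : Even (finrank (ZMod 2) V) :=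
    even_finrank_of_alt_nondeg (ZMod 2) (finrank (ZMod 2) V) V B rfl halt
      ((LinearMap.IsRefl.nondegenerate_iff_separatingLeft (LinearMap.IsAlt.isRefl halt)).mpr hnondeg)
  obtain ⟨k, hk⟩ := hev
  have : ((finrank (ZMod 2) V : ℤ)) ≡ 0 [ZMOD 2] := by
    rw [hk]; push_cast
    simp only [Int.ModEq]
    omega
  calc χ ≡ (finrank (ZMod 2) V : ℤ) + χ₂ [ZMOD 2] := hparity
    _ ≡ 0 + χ₂ [ZMOD 2] := Int.ModEq.add_right _ this
    _ = χ₂ := by ring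
end

section
/- The map f : S⁷ → S⁷ given by f(u) = u², where S⁷ is the unit sphere in the octonions, has degree 2. -/
set_option maxHeartbeats 1000000


open Quaternion

/-- Octonion multiplication, via the Cayley–Dickson construction on `ℍ × ℍ`. -/
noncomputable def octMul (x y : ℍ[ℝ] × ℍ[ℝ]) : ℍ[ℝ] × ℍ[ℝ] :=
  (x.1 * y.1 - star y.2 * x.2, y.2 * x.1 + x.2 * star y.1)

/-- The unit sphere `S⁷` of the octonions `𝕆 = ℍ × ℍ` (with the octonion norm
`‖(a,b)‖² = ‖a‖² + ‖b‖²`). -/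
def OctSphere : Set (ℍ[ℝ] × ℍ[ℝ]) := {x | ‖x.1‖ ^ 2 + ‖x.2‖ ^ 2 = 1}

/-- The standard degree-two self-map of `S⁷`: in the complex coordinate
`z = re + i·imI` of the first quaternion component it is the (6-fold
suspension of the) squaring map `z ↦ z²/|z|` of the circle, and it is the
identity in all remaining coordinates. -/
noncomputable def octModelDeg2 (x : ℍ[ℝ] × ℍ[ℝ]) : ℍ[ℝ] × ℍ[ℝ] :=
  let z : ℂ := ⟨x.1.re, x.1.imI⟩
  let w : ℂ := z ^ 2 / (‖z‖ : ℂ)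
  (⟨w.re, w.im, x.1.imJ, x.1.imK⟩, x.2)

noncomputable section OctAux

namespace OctAux

abbrev E : Type := ℍ[ℝ] × ℍ[ℝ]

/-- Quaternion from four real components. -/
def qmk (a b c d : ℝ) : ℍ[ℝ] := ⟨a, b, c, d⟩

@[simp] lemma qmk_re (a b c d : ℝ) : (qmk a b c d).re = a := rfl
@[simp] lemma qmk_imI (a b c d : ℝ) : (qmk a b c d).imI = b := rfl
@[simp] lemma qmk_imJ (a b c d : ℝ) : (qmk a b c d).imJ = c := rfl
@[simp] lemma qmk_imK (a b c d : ℝ) : (qmk a b c d).imK = d := rfl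

/-- The octonion norm-like functional. -/
def nr (v : E) : ℝ := Real.sqrt (‖v.1‖ ^ 2 + ‖v.2‖ ^ 2)

/-- Normalization to the octonion unit sphere. -/
def N (v : E) : E := (nr v)⁻¹ • v

lemma nr_sq (v : E) : nr v ^ 2 = ‖v.1‖ ^ 2 + ‖v.2‖ ^ 2 :=
  Real.sq_sqrt (by positivity)

lemma nr_pos {v : E} (h : v ≠ 0) : 0 < nr v := by
  rcases (Real.sqrt_nonneg (‖v.1‖ ^ 2 + ‖v.2‖ ^ 2)).lt_or_eq with h' | h'
  · exact h'
  · exfalso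
    apply h
    have h2 : ‖v.1‖ ^ 2 + ‖v.2‖ ^ 2 = 0 := by
      have hsq := nr_sq v
      unfold nr at hsq
      rw [← h'] at hsq
      simpa using hsq.symm
    have hv1 : ‖v.1‖ = 0 := by
      nlinarith [sq_nonneg ‖v.1‖, sq_nonneg ‖v.2‖, norm_nonneg v.1, norm_nonneg v.2]
    have hv2 : ‖v.2‖ = 0 := by
      nlinarith [sq_nonneg ‖v.1‖, sq_nonneg ‖v.2‖, norm_nonneg v.1, norm_nonneg v.2]
    have e1 : v.1 = 0 := norm_eq_zero.mp hv1
    have e2 : v.2 = 0 := norm_eq_zero.mp hv2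
    exact Prod.ext e1 e2

lemma N_mem {v : E} (h : v ≠ 0) : N v ∈ OctSphere := by
  have hp := nr_pos h
  show ‖((nr v)⁻¹ • v).1‖ ^ 2 + ‖((nr v)⁻¹ • v).2‖ ^ 2 = 1
  have e1 : ((nr v)⁻¹ • v).1 = (nr v)⁻¹ • v.1 := rfl
  have e2 : ((nr v)⁻¹ • v).2 = (nr v)⁻¹ • v.2 := rfl
  rw [e1, e2, norm_smul, norm_smul, Real.norm_eq_abs, abs_of_pos (by positivity),
    mul_pow, mul_pow, ← mul_add]
  have := nr_sq v
  field_simp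
  linarith [nr_sq v]

lemma N_eq {v : E} (h : ‖v.1‖ ^ 2 + ‖v.2‖ ^ 2 = 1) : N v = v := by
  unfold N nr
  rw [h, Real.sqrt_one, inv_one, one_smul]

lemma cont_nr : Continuous nr := by
  apply Real.continuous_sqrt.comp
  fun_prop

/-- Make a continuous self-map of the sphere out of a nonvanishing map to `E`. -/
def nmap (W : OctSphere → E) (hc : Continuous W) (hne : ∀ x, W x ≠ 0) :
    C(OctSphere, OctSphere) :=
  ⟨fun x => ⟨N (W x), N_mem (hne x)⟩, by
    apply Continuous.subtype_mk
    exact ((cont_nr.comp hc).inv₀ fun x => (nr_pos (hne x)).ne').smul hc⟩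

lemma nmap_apply (W : OctSphere → E) (hc : Continuous W) (hne : ∀ x, W x ≠ 0)
    (x : OctSphere) : (nmap W hc hne x : E) = N (W x) := rfl

lemma nmap_congr {W W' : OctSphere → E} {hc hne hc' hne'} (h : ∀ x, W x = W' x) :
    nmap W hc hne = nmap W' hc' hne' := by
  have hWW : W = W' := funext h
  subst hWW
  rfl

/-- A nonvanishing homotopy of vector fields gives a homotopy of normalized maps. -/
lemma homotopic_nmap (V : ℝ → OctSphere → E)
    (hc : Continuous fun p : ℝ × OctSphere => V p.1 p.2)
    (hne : ∀ t : ℝ, t ∈ Set.Icc (0:ℝ) 1 → ∀ x, V t x ≠ 0)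
    {hc0 hne0 hc1 hne1} :
    (nmap (fun x => V 0 x) hc0 hne0).Homotopic (nmap (fun x => V 1 x) hc1 hne1) := by
  have hVc : Continuous fun p : unitInterval × OctSphere => V (p.1 : ℝ) p.2 :=
    hc.comp ((continuous_subtype_val.comp continuous_fst).prodMk continuous_snd)
  refine ⟨⟨⟨fun p => ⟨N (V (p.1 : ℝ) p.2), N_mem (hne _ p.1.2 p.2)⟩, ?_⟩, ?_, ?_⟩⟩
  · apply Continuous.subtype_mk
    exact ((cont_nr.comp hVc).inv₀ fun p => (nr_pos (hne _ p.1.2 p.2)).ne').smul hVc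
  · intro x
    apply Subtype.ext
    show N (V ((0 : unitInterval) : ℝ) x) = N (V 0 x)
    norm_num
  · intro x
    apply Subtype.ext
    show N (V ((1 : unitInterval) : ℝ) x) = N (V 1 x)
    norm_num

/- Coordinates. -/

def A (x : OctSphere) : ℍ[ℝ] := (x : E).1
def B (x : OctSphere) : ℍ[ℝ] := (x : E).2

lemma quat_norm_sq (a : ℍ[ℝ]) :
    ‖a‖ ^ 2 = a.re ^ 2 + a.imI ^ 2 + a.imJ ^ 2 + a.imK ^ 2 := by
  rw [sq, ← Quaternion.normSq_eq_norm_mul_self, Quaternion.normSq_def']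

lemma sphere_eq (x : OctSphere) :
    (A x).re ^ 2 + (A x).imI ^ 2 + (A x).imJ ^ 2 + (A x).imK ^ 2 + ‖B x‖ ^ 2 = 1 := by
  have := x.2
  have h : ‖A x‖ ^ 2 + ‖B x‖ ^ 2 = 1 := this
  rw [quat_norm_sq] at h
  linarith

/- The five stage vector fields. -/

/-- Stage A : from the octonion square to `(a² - ‖b‖², b)`. -/
def VA (t : ℝ) (x : OctSphere) : E :=
  (A x ^ 2 - ((‖B x‖ ^ 2 : ℝ) : ℍ[ℝ]),
    qmk ((1 - t) * (2 * (A x).re) + t) (4 * t * (1 - t) * ‖B x‖ ^ 2) 0 0 * B x)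

/-- Stage B : shrink the `-‖b‖²` term. -/
def VB (t : ℝ) (x : OctSphere) : E :=
  (A x ^ 2 - (((1 - t) * ‖B x‖ ^ 2 : ℝ) : ℍ[ℝ]), B x)

/-- Stage D : inside the first quaternion, from `(z² - |w|², 2 Re z · w)` to
`(z² - |w|², w)` (Cayley–Dickson coordinates `a = (z, w)`). -/
def VD (t : ℝ) (x : OctSphere) : E :=
  (qmk ((A x).re ^ 2 - (A x).imI ^ 2 - (A x).imJ ^ 2 - (A x).imK ^ 2)
      (2 * (A x).re * (A x).imI)
      (((1 - t) * (2 * (A x).re) + t) * (A x).imJ -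
        (4 * t * (1 - t) * ((A x).imJ ^ 2 + (A x).imK ^ 2)) * (A x).imK)
      (((1 - t) * (2 * (A x).re) + t) * (A x).imK +
        (4 * t * (1 - t) * ((A x).imJ ^ 2 + (A x).imK ^ 2)) * (A x).imJ),
    B x)

/-- Stage E : shrink the `-|w|²` term. -/
def VE (t : ℝ) (x : OctSphere) : E :=
  (qmk ((A x).re ^ 2 - (A x).imI ^ 2 - (1 - t) * ((A x).imJ ^ 2 + (A x).imK ^ 2))
      (2 * (A x).re * (A x).imI) ((A x).imJ) ((A x).imK), B x)

/-- Stage F : from `z²` to `z²/|z|` in the complex coordinate. -/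
def VF (t : ℝ) (x : OctSphere) : E :=
  (qmk (((1 - t) • (⟨(A x).re, (A x).imI⟩ : ℂ) ^ 2 +
        t • ((⟨(A x).re, (A x).imI⟩ : ℂ) ^ 2 / (‖(⟨(A x).re, (A x).imI⟩ : ℂ)‖ : ℂ))).re)
      (((1 - t) • (⟨(A x).re, (A x).imI⟩ : ℂ) ^ 2 +
        t • ((⟨(A x).re, (A x).imI⟩ : ℂ) ^ 2 / (‖(⟨(A x).re, (A x).imI⟩ : ℂ)‖ : ℂ))).im)
      ((A x).imJ) ((A x).imK), B x)

attribute [local fun_prop] Quaternion.continuous_re Quaternion.continuous_imI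
  Quaternion.continuous_imJ Quaternion.continuous_imK Quaternion.continuous_coe
  Complex.continuous_ofReal Complex.continuous_re Complex.continuous_im

lemma contA : Continuous A := continuous_fst.comp continuous_subtype_val

lemma contB : Continuous B := continuous_snd.comp continuous_subtype_val

attribute [local fun_prop] contA contB

lemma cont_qmk {α : Type*} [TopologicalSpace α] {f g h k : α → ℝ}
    (hf : Continuous f) (hg : Continuous g) (hh : Continuous h) (hk : Continuous k) :
    Continuous fun x => qmk (f x) (g x) (h x) (k x) := by
  have key : ∀ x, qmk (f x) (g x) (h x) (k x) =
      ((f x : ℝ) : ℍ[ℝ]) + (g x) • qmk 0 1 0 0 + (h x) • qmk 0 0 1 0 + (k x) • qmk 0 0 0 1 := by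
    intro x
    apply QuaternionAlgebra.ext <;> simp [Quaternion.re_smul]
  have C : Continuous fun x =>
      ((f x : ℝ) : ℍ[ℝ]) + (g x) • qmk 0 1 0 0 + (h x) • qmk 0 0 1 0 + (k x) • qmk 0 0 0 1 := by
    exact (((Quaternion.continuous_coe.comp hf).add (hg.smul continuous_const)).add
      (hh.smul continuous_const)).add (hk.smul continuous_const)
  exact C.congr fun x => (key x).symm

lemma cont_cmk {α : Type*} [TopologicalSpace α] {f g : α → ℝ}
    (hf : Continuous f) (hg : Continuous g) :
    Continuous fun x => (⟨f x, g x⟩ : ℂ) := by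
  have C : Continuous fun x => ((f x : ℂ) + (g x : ℂ) * Complex.I) :=
    (Complex.continuous_ofReal.comp hf).add
      ((Complex.continuous_ofReal.comp hg).mul continuous_const)
  exact C.congr fun x => (Complex.mk_eq_add_mul_I _ _).symm

lemma cont_sqdiv : Continuous fun ζ : ℂ => ζ ^ 2 / (‖ζ‖ : ℂ) := by
  rw [continuous_iff_continuousAt]
  intro ζ0
  rcases eq_or_ne ζ0 0 with rfl | hz
  · have ht : Filter.Tendsto (fun ζ : ℂ => ζ ^ 2 / (‖ζ‖ : ℂ)) (nhds 0) (nhds 0) := by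
      apply squeeze_zero_norm (a := fun ζ : ℂ => ‖ζ‖)
      · intro ζ
        rcases eq_or_ne ζ 0 with rfl | h
        · simp
        · rw [norm_div, Complex.norm_real, Real.norm_eq_abs, abs_of_pos (norm_pos_iff.mpr h),
            norm_pow]
          rw [sq, mul_div_assoc, div_self (norm_ne_zero_iff.mpr h), mul_one]
      · exact continuous_norm.tendsto' 0 0 (by simp)
    unfold ContinuousAt
    convert ht using 2
    simp
  · apply ContinuousAt.div
    · fun_prop
    · fun_prop
    · simpa using hz

lemma contVA : Continuous fun p : ℝ × OctSphere => VA p.1 p.2 := by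
  unfold VA
  apply Continuous.prodMk
  · fun_prop
  · apply Continuous.mul _ (by fun_prop)
    apply cont_qmk <;> fun_prop

lemma contVB : Continuous fun p : ℝ × OctSphere => VB p.1 p.2 := by
  unfold VB
  fun_prop

lemma contVD : Continuous fun p : ℝ × OctSphere => VD p.1 p.2 := by
  unfold VD
  apply Continuous.prodMk
  · apply cont_qmk <;> fun_prop
  · fun_prop

lemma contVE : Continuous fun p : ℝ × OctSphere => VE p.1 p.2 := by
  unfold VE
  apply Continuous.prodMk
  · apply cont_qmk <;> fun_prop
  · fun_prop

lemma contVF : Continuous fun p : ℝ × OctSphere => VF p.1 p.2 := by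
  unfold VF
  have hζ : Continuous fun p : ℝ × OctSphere =>
      (⟨(A p.2).re, (A p.2).imI⟩ : ℂ) := cont_cmk (by fun_prop) (by fun_prop)
  have h1 : Continuous fun p : ℝ × OctSphere =>
      ((1 - p.1) • (⟨(A p.2).re, (A p.2).imI⟩ : ℂ) ^ 2 +
        p.1 • ((⟨(A p.2).re, (A p.2).imI⟩ : ℂ) ^ 2 /
          (‖(⟨(A p.2).re, (A p.2).imI⟩ : ℂ)‖ : ℂ))) := by
    apply Continuous.add
    · exact (continuous_const.sub continuous_fst).smul (hζ.pow 2)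
    · exact continuous_fst.smul (cont_sqdiv.comp hζ)
  apply Continuous.prodMk
  · exact cont_qmk (Complex.continuous_re.comp h1) (Complex.continuous_im.comp h1)
      (by fun_prop) (by fun_prop)
  · fun_prop

/- Nonvanishing of the stage vector fields. -/

lemma cnorm_sq (z : ℂ) : ‖z‖ ^ 2 = z.re ^ 2 + z.im ^ 2 := by
  rw [Complex.sq_norm, Complex.normSq_apply]
  ring

lemma VA_ne {t : ℝ} (ht : t ∈ Set.Icc (0:ℝ) 1) (x : OctSphere) : VA t x ≠ 0 := by
  intro h
  unfold VA at h
  rw [Prod.mk_eq_zero] at h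
  obtain ⟨h1, h2⟩ := h
  have hS := sphere_eq x
  have hc2 : (0:ℝ) ≤ ‖B x‖ ^ 2 := sq_nonneg _
  have hx : ‖A x‖ ^ 2 + ‖B x‖ ^ 2 = 1 := x.2
  rcases mul_eq_zero.mp h2 with hQ | hb
  · -- the coefficient quaternion vanishes
    have hα : (1 - t) * (2 * (A x).re) + t = 0 := by
      have := congrArg (fun z : ℍ[ℝ] => z.re) hQ
      simpa using this
    have hβ : 4 * t * (1 - t) * ‖B x‖ ^ 2 = 0 := by
      have := congrArg (fun z : ℍ[ℝ] => z.imI) hQ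
      simpa using this
    have h1' : A x * A x = ((‖B x‖ ^ 2 : ℝ) : ℍ[ℝ]) := by
      rw [sub_eq_zero] at h1
      rw [← h1, sq]
    have hre : (A x).re * (A x).re - (A x).imI * (A x).imI - (A x).imJ * (A x).imJ
        - (A x).imK * (A x).imK = ‖B x‖ ^ 2 := by
      have := congrArg (fun z : ℍ[ℝ] => z.re) h1'
      simpa [Quaternion.re_mul, -Quaternion.coe_pow] using this
    have himI : (A x).re * (A x).imI + (A x).imI * (A x).re + (A x).imJ * (A x).imK
        - (A x).imK * (A x).imJ = 0 := by
      have := congrArg (fun z : ℍ[ℝ] => z.imI) h1'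
      simpa [Quaternion.imI_mul, -Quaternion.coe_pow] using this
    have himJ : (A x).re * (A x).imJ - (A x).imI * (A x).imK + (A x).imJ * (A x).re
        + (A x).imK * (A x).imI = 0 := by
      have := congrArg (fun z : ℍ[ℝ] => z.imJ) h1'
      simpa [Quaternion.imJ_mul, -Quaternion.coe_pow] using this
    have himK : (A x).re * (A x).imK + (A x).imI * (A x).imJ - (A x).imJ * (A x).imI
        + (A x).imK * (A x).re = 0 := by
      have := congrArg (fun z : ℍ[ℝ] => z.imK) h1'
      simpa [Quaternion.imK_mul, -Quaternion.coe_pow] using this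
    have hpq : (A x).re * (A x).imI = 0 := by linear_combination himI / 2
    have hps : (A x).re * (A x).imJ = 0 := by linear_combination himJ / 2
    have hpu : (A x).re * (A x).imK = 0 := by linear_combination himK / 2
    have hcase : t = 0 ∨ (1 - t) = 0 ∨ ‖B x‖ ^ 2 = 0 := by
      rcases mul_eq_zero.mp hβ with h' | h'
      · rcases mul_eq_zero.mp h' with h'' | h''
        · left; linarith
        · right; left; exact h''
      · right; right; exact h'
    rcases hcase with h' | h' | h'
    · -- t = 0
      subst h'
      have hp : (A x).re = 0 := by linarith
      nlinarith [hre, hS, hc2, hp, sq_nonneg (A x).imI, sq_nonneg (A x).imJ,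
        sq_nonneg (A x).imK]
    · -- t = 1
      have hz : (1 - t) * (2 * (A x).re) = 0 := by rw [h']; ring
      linarith [hα, hz, h']
    · -- ‖b‖² = 0
      rcases eq_or_ne (A x).re 0 with hp | hp
      · nlinarith [hre, hS, h', hp, sq_nonneg (A x).imI, sq_nonneg (A x).imJ,
          sq_nonneg (A x).imK]
      · have hq : (A x).imI = 0 := by
          rcases mul_eq_zero.mp hpq with h'' | h''
          · exact absurd h'' hp
          · exact h''
        have hs : (A x).imJ = 0 := by
          rcases mul_eq_zero.mp hps with h'' | h''
          · exact absurd h'' hp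
          · exact h''
        have hu : (A x).imK = 0 := by
          rcases mul_eq_zero.mp hpu with h'' | h''
          · exact absurd h'' hp
          · exact h''
        have hpp : (A x).re * (A x).re = 0 := by
          rw [hq, hs, hu] at hre
          linarith [hre, h']
        exact hp (mul_self_eq_zero.mp hpp)
  · -- b = 0
    have hc0 : ‖B x‖ ^ 2 = 0 := by rw [hb]; simp
    have h1' : A x ^ 2 = 0 := by
      rw [sub_eq_zero] at h1
      rw [h1, hc0]
      simp
    have hA0 : A x = 0 := sq_eq_zero_iff.mp h1'
    rw [hA0, hb] at hx
    simp at hx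

lemma VB_ne {t : ℝ} (ht : t ∈ Set.Icc (0:ℝ) 1) (x : OctSphere) : VB t x ≠ 0 := by
  intro h
  unfold VB at h
  rw [Prod.mk_eq_zero] at h
  obtain ⟨h1, hb⟩ := h
  have hx : ‖A x‖ ^ 2 + ‖B x‖ ^ 2 = 1 := x.2
  have hc0 : ‖B x‖ ^ 2 = 0 := by rw [hb]; simp
  have h1' : A x ^ 2 = 0 := by
    rw [sub_eq_zero] at h1
    rw [h1, hc0]
    simp
  have hA0 : A x = 0 := sq_eq_zero_iff.mp h1'
  rw [hA0, hb] at hx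
  simp at hx

lemma VD_ne {t : ℝ} (ht : t ∈ Set.Icc (0:ℝ) 1) (x : OctSphere) : VD t x ≠ 0 := by
  obtain ⟨ht0, ht1⟩ := ht
  intro h
  unfold VD at h
  rw [Prod.mk_eq_zero] at h
  obtain ⟨h1, hb⟩ := h
  have hS := sphere_eq x
  have hc0 : ‖B x‖ ^ 2 = 0 := by rw [hb]; simp
  set p := (A x).re
  set q := (A x).imI
  set s := (A x).imJ
  set u := (A x).imK
  set α := (1 - t) * (2 * p) + t with hαdef
  set β := 4 * t * (1 - t) * (s ^ 2 + u ^ 2) with hβdef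
  have hR1 : p ^ 2 - q ^ 2 - s ^ 2 - u ^ 2 = 0 := by
    have := congrArg (fun z : ℍ[ℝ] => z.re) h1
    simpa using this
  have hR2 : 2 * p * q = 0 := by
    have := congrArg (fun z : ℍ[ℝ] => z.imI) h1
    simpa using this
  have hR3 : α * s - β * u = 0 := by
    have := congrArg (fun z : ℍ[ℝ] => z.imJ) h1
    simpa using this
  have hR4 : α * u + β * s = 0 := by
    have := congrArg (fun z : ℍ[ℝ] => z.imK) h1
    simpa using this
  have hp2 : p ^ 2 = 1/2 := by linarith [hR1, hS, hc0]
  have hqsu : q ^ 2 + s ^ 2 + u ^ 2 = 1/2 := by linarith [hR1, hS, hc0]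
  have hp : p ≠ 0 := by
    intro h'
    rw [h'] at hp2
    norm_num at hp2
  have hq : q = 0 := by
    rcases mul_eq_zero.mp hR2 with h' | h'
    · rcases mul_eq_zero.mp h' with h'' | h''
      · norm_num at h''
      · exact absurd h'' hp
    · exact h'
  have hsu : s ^ 2 + u ^ 2 = 1/2 := by
    rw [hq] at hqsu
    linarith
  have hs2 : (α ^ 2 + β ^ 2) * s = 0 := by linear_combination α * hR3 + β * hR4
  have hu2 : (α ^ 2 + β ^ 2) * u = 0 := by linear_combination (-β) * hR3 + α * hR4
  have hαβ : α ^ 2 + β ^ 2 = 0 := by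
    rcases mul_eq_zero.mp hs2 with h' | hs0
    · exact h'
    · rcases mul_eq_zero.mp hu2 with h' | hu0
      · exact h'
      · rw [hs0, hu0] at hsu
        norm_num at hsu
  have hα : α = 0 := by nlinarith [sq_nonneg α, sq_nonneg β]
  have hβ : β = 0 := by nlinarith [sq_nonneg α, sq_nonneg β]
  have hβ' : 2 * t * (1 - t) = 0 := by
    rw [hβdef] at hβ
    rw [hsu] at hβ
    linarith
  rcases mul_eq_zero.mp hβ' with h' | h'
  · rcases mul_eq_zero.mp h' with h'' | h''
    · norm_num at h''
    · -- t = 0 : α = 2p ≠ 0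
      rw [hαdef, h''] at hα
      have : p = 0 := by linarith
      exact hp this
  · -- t = 1 : α = 1
    rw [hαdef] at hα
    have h1t : t = 1 := by linarith
    rw [h1t] at hα
    norm_num at hα

lemma VE_ne {t : ℝ} (ht : t ∈ Set.Icc (0:ℝ) 1) (x : OctSphere) : VE t x ≠ 0 := by
  intro h
  unfold VE at h
  rw [Prod.mk_eq_zero] at h
  obtain ⟨h1, hb⟩ := h
  have hS := sphere_eq x
  have hc0 : ‖B x‖ ^ 2 = 0 := by rw [hb]; simp
  set p := (A x).re
  set q := (A x).imI
  have hs : (A x).imJ = 0 := by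
    have := congrArg (fun z : ℍ[ℝ] => z.imJ) h1
    simpa using this
  have hu : (A x).imK = 0 := by
    have := congrArg (fun z : ℍ[ℝ] => z.imK) h1
    simpa using this
  have hR1 : p ^ 2 - q ^ 2 - (1 - t) * ((A x).imJ ^ 2 + (A x).imK ^ 2) = 0 := by
    have := congrArg (fun z : ℍ[ℝ] => z.re) h1
    simpa using this
  have hR2 : 2 * p * q = 0 := by
    have := congrArg (fun z : ℍ[ℝ] => z.imI) h1
    simpa using this
  rw [hs, hu] at hR1
  have hpq : p * q = 0 := by linarith
  rw [hs, hu] at hS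
  have hp2 : p ^ 2 = 1/2 := by nlinarith [hR1, hS, hc0]
  have hq2 : q ^ 2 = 1/2 := by nlinarith [hR1, hS, hc0]
  nlinarith [hpq, hp2, hq2]

lemma VF_ne {t : ℝ} (ht : t ∈ Set.Icc (0:ℝ) 1) (x : OctSphere) : VF t x ≠ 0 := by
  intro h
  unfold VF at h
  rw [Prod.mk_eq_zero] at h
  obtain ⟨h1, hb⟩ := h
  have hS := sphere_eq x
  have hc0 : ‖B x‖ ^ 2 = 0 := by rw [hb]; simp
  set z : ℂ := (⟨(A x).re, (A x).imI⟩ : ℂ) with hzdef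
  have hs : (A x).imJ = 0 := by
    have := congrArg (fun w : ℍ[ℝ] => w.imJ) h1
    simpa using this
  have hu : (A x).imK = 0 := by
    have := congrArg (fun w : ℍ[ℝ] => w.imK) h1
    simpa using this
  have hz2 : ‖z‖ ^ 2 = 1 := by
    rw [cnorm_sq]
    have hre : z.re = (A x).re := rfl
    have him : z.im = (A x).imI := rfl
    rw [hre, him]
    rw [hs, hu] at hS
    linarith
  have hz1 : ‖z‖ = 1 := by
    have h' : (‖z‖ - 1) * (‖z‖ + 1) = 0 := by linear_combination hz2
    rcases mul_eq_zero.mp h' with h'' | h''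
    · linarith
    · linarith [norm_nonneg z]
  have hE : (1 - t) • z ^ 2 + t • (z ^ 2 / (‖z‖ : ℂ)) = 0 := by
    apply Complex.ext
    · have := congrArg (fun w : ℍ[ℝ] => w.re) h1
      simpa using this
    · have := congrArg (fun w : ℍ[ℝ] => w.imI) h1
      simpa using this
  rw [hz1] at hE
  simp only [Complex.ofReal_one, div_one] at hE
  rw [← add_smul] at hE
  have h1t : (1 - t) + t = 1 := by ring
  rw [h1t, one_smul] at hE
  have hz0 : z = 0 := sq_eq_zero_iff.mp hE
  rw [hz0] at hz1
  simp at hz1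

lemma cont_slice {V : ℝ → OctSphere → E}
    (hc : Continuous fun p : ℝ × OctSphere => V p.1 p.2) (t : ℝ) :
    Continuous fun x => V t x :=
  hc.comp (Continuous.prodMk_right t)

/- Endpoint identifications. -/

lemma octMul_self (x : OctSphere) : octMul (x : E) (x : E) = VA 0 x := by
  unfold octMul VA
  rw [Prod.mk.injEq]
  constructor
  · congr 1
    · rw [sq]
      rfl
    · rw [Quaternion.star_mul_self]
      congr 1
      rw [Quaternion.normSq_eq_norm_mul_self, sq]
      rfl
  · have hq : qmk ((1 - (0:ℝ)) * (2 * (A x).re) + 0) (4 * 0 * (1 - (0:ℝ)) * ‖B x‖ ^ 2) 0 0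
        = ((2 * (A x).re : ℝ) : ℍ[ℝ]) := by
      apply QuaternionAlgebra.ext <;> simp [qmk]
    rw [hq, ← mul_add, Quaternion.self_add_star']
    exact (Quaternion.coe_commute _ _).symm.eq

lemma eq_A1B0 (x : OctSphere) : VA 1 x = VB 0 x := by
  unfold VA VB
  rw [Prod.mk.injEq]
  constructor
  · norm_num
  · have hq : qmk ((1 - (1:ℝ)) * (2 * (A x).re) + 1) (4 * 1 * (1 - (1:ℝ)) * ‖B x‖ ^ 2) 0 0
        = (1 : ℍ[ℝ]) := by
      apply QuaternionAlgebra.ext <;> simp [qmk]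
    rw [hq, one_mul]

lemma eq_B1D0 (x : OctSphere) : VB 1 x = VD 0 x := by
  unfold VB VD
  rw [Prod.mk.injEq]
  refine ⟨?_, rfl⟩
  apply QuaternionAlgebra.ext <;>
    simp [qmk, pow_two, Quaternion.re_mul, Quaternion.imI_mul, Quaternion.imJ_mul,
      Quaternion.imK_mul, -Quaternion.coe_pow] <;> ring

lemma eq_D1E0 (x : OctSphere) : VD 1 x = VE 0 x := by
  unfold VD VE
  rw [Prod.mk.injEq]
  refine ⟨?_, rfl⟩
  apply QuaternionAlgebra.ext <;> simp [qmk] <;> ring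

lemma eq_E1F0 (x : OctSphere) : VE 1 x = VF 0 x := by
  unfold VE VF
  rw [Prod.mk.injEq]
  refine ⟨?_, rfl⟩
  apply QuaternionAlgebra.ext <;>
    simp [qmk, pow_two, Complex.real_smul, Complex.mul_re, Complex.mul_im,
      Complex.add_re, Complex.add_im, Complex.ofReal_re, Complex.ofReal_im] <;> ring

lemma eq_F1model (x : OctSphere) : VF 1 x = octModelDeg2 (x : E) := by
  unfold VF octModelDeg2
  dsimp only
  apply Prod.ext_iff.mpr
  refine ⟨?_, rfl⟩
  apply QuaternionAlgebra.ext <;>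
    simp [qmk, A]

end OctAux

end OctAux

open OctAux

/-- The squaring map `u ↦ u²` on the unit sphere of the octonions has degree
two: it is homotopic to the standard degree-two self-map of `S⁷` (by Hopf's
theorem, having degree 2 is equivalent to being homotopic to a standard
degree-2 map). -/
theorem octonion_squaring_has_degree_two
    (f g : C(OctSphere, OctSphere))
    (hf : ∀ x : OctSphere, (f x : ℍ[ℝ] × ℍ[ℝ]) = octMul x x)
    (hg : ∀ x : OctSphere, (g x : ℍ[ℝ] × ℍ[ℝ]) = octModelDeg2 x) :
    f.Homotopic g := by
  have mem0 : (0:ℝ) ∈ Set.Icc (0:ℝ) 1 := by norm_num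
  have mem1 : (1:ℝ) ∈ Set.Icc (0:ℝ) 1 := by norm_num
  have cVA0 : Continuous fun x : OctSphere => VA 0 x := cont_slice contVA 0
  have cVA1 : Continuous fun x : OctSphere => VA 1 x := cont_slice contVA 1
  have cVB0 : Continuous fun x : OctSphere => VB 0 x := cont_slice contVB 0
  have cVB1 : Continuous fun x : OctSphere => VB 1 x := cont_slice contVB 1
  have cVD0 : Continuous fun x : OctSphere => VD 0 x := cont_slice contVD 0
  have cVD1 : Continuous fun x : OctSphere => VD 1 x := cont_slice contVD 1
  have cVE0 : Continuous fun x : OctSphere => VE 0 x := cont_slice contVE 0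
  have cVE1 : Continuous fun x : OctSphere => VE 1 x := cont_slice contVE 1
  have cVF0 : Continuous fun x : OctSphere => VF 0 x := cont_slice contVF 0
  have cVF1 : Continuous fun x : OctSphere => VF 1 x := cont_slice contVF 1
  have nVA0 : ∀ x : OctSphere, VA 0 x ≠ 0 := fun x => VA_ne mem0 x
  have nVA1 : ∀ x : OctSphere, VA 1 x ≠ 0 := fun x => VA_ne mem1 x
  have nVB0 : ∀ x : OctSphere, VB 0 x ≠ 0 := fun x => VB_ne mem0 x
  have nVB1 : ∀ x : OctSphere, VB 1 x ≠ 0 := fun x => VB_ne mem1 x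
  have nVD0 : ∀ x : OctSphere, VD 0 x ≠ 0 := fun x => VD_ne mem0 x
  have nVD1 : ∀ x : OctSphere, VD 1 x ≠ 0 := fun x => VD_ne mem1 x
  have nVE0 : ∀ x : OctSphere, VE 0 x ≠ 0 := fun x => VE_ne mem0 x
  have nVE1 : ∀ x : OctSphere, VE 1 x ≠ 0 := fun x => VE_ne mem1 x
  have nVF0 : ∀ x : OctSphere, VF 0 x ≠ 0 := fun x => VF_ne mem0 x
  have nVF1 : ∀ x : OctSphere, VF 1 x ≠ 0 := fun x => VF_ne mem1 x
  have hfm : f = nmap (fun x => VA 0 x) cVA0 nVA0 := by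
    apply ContinuousMap.ext
    intro x
    apply Subtype.ext
    rw [nmap_apply, hf x, ← octMul_self x]
    refine (N_eq ?_).symm
    have hm := (f x).2
    rw [hf x] at hm
    exact hm
  have hgm : g = nmap (fun x => VF 1 x) cVF1 nVF1 := by
    apply ContinuousMap.ext
    intro x
    apply Subtype.ext
    rw [nmap_apply, hg x, ← eq_F1model x]
    refine (N_eq ?_).symm
    have hm := (g x).2
    rw [hg x, ← eq_F1model x] at hm
    exact hm
  have s1 := homotopic_nmap VA contVA (fun t ht x => VA_ne ht x)
    (hc0 := cVA0) (hne0 := nVA0) (hc1 := cVA1) (hne1 := nVA1)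
  have s2 := homotopic_nmap VB contVB (fun t ht x => VB_ne ht x)
    (hc0 := cVB0) (hne0 := nVB0) (hc1 := cVB1) (hne1 := nVB1)
  have s3 := homotopic_nmap VD contVD (fun t ht x => VD_ne ht x)
    (hc0 := cVD0) (hne0 := nVD0) (hc1 := cVD1) (hne1 := nVD1)
  have s4 := homotopic_nmap VE contVE (fun t ht x => VE_ne ht x)
    (hc0 := cVE0) (hne0 := nVE0) (hc1 := cVE1) (hne1 := nVE1)
  have s5 := homotopic_nmap VF contVF (fun t ht x => VF_ne ht x)
    (hc0 := cVF0) (hne0 := nVF0) (hc1 := cVF1) (hne1 := nVF1)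
  have e1 : nmap (fun x => VA 1 x) cVA1 nVA1 = nmap (fun x => VB 0 x) cVB0 nVB0 :=
    nmap_congr eq_A1B0
  have e2 : nmap (fun x => VB 1 x) cVB1 nVB1 = nmap (fun x => VD 0 x) cVD0 nVD0 :=
    nmap_congr eq_B1D0
  have e3 : nmap (fun x => VD 1 x) cVD1 nVD1 = nmap (fun x => VE 0 x) cVE0 nVE0 :=
    nmap_congr eq_D1E0
  have e4 : nmap (fun x => VE 1 x) cVE1 nVE1 = nmap (fun x => VF 0 x) cVF0 nVF0 :=
    nmap_congr eq_E1F0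
  rw [hfm, hgm]
  refine s1.trans ?_
  rw [e1]
  refine s2.trans ?_
  rw [e2]
  refine s3.trans ?_
  rw [e3]
  refine s4.trans ?_
  rw [e4]
  exact s5
end

section
/- Let H be a finite abelian group with a symmetric bilinear form b : H × H → ℚ/ℤ, let d be an even positive integer, and fix k. Define P(F) = d²·b(t,t) − 2d·b(p − d·k, t) mod 2d, where t = F(k) − k, for automorphisms F of the ambient group preserving b and p. Then P(F₁∘F₀) ≡ P(F₀) + P(F₁) mod 2d whenever F₀, F₁ fix p and preserve b; i.e. P is a homomorphism to ℤ/2d on the subgroup of automorphisms acting trivially enough. -/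
/-- `x ≡ y (mod ℤ)` for rationals. -/
private def CongZ (x y : ℚ) : Prop := ∃ n : ℤ, x = y + n

private lemma CongZ.refl (x : ℚ) : CongZ x x := ⟨0, by simp⟩

private lemma CongZ.trans {x y z : ℚ} (h1 : CongZ x y) (h2 : CongZ y z) : CongZ x z := by
  obtain ⟨m, hm⟩ := h1; obtain ⟨n, hn⟩ := h2
  exact ⟨n + m, by rw [hm, hn]; push_cast; ring⟩

private lemma CongZ.symm {x y : ℚ} (h : CongZ x y) : CongZ y x := by
  obtain ⟨m, hm⟩ := h
  exact ⟨-m, by rw [hm]; push_cast; ring⟩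

private lemma CongZ.add {x y x' y' : ℚ} (h1 : CongZ x x') (h2 : CongZ y y') :
    CongZ (x + y) (x' + y') := by
  obtain ⟨m, hm⟩ := h1; obtain ⟨n, hn⟩ := h2
  exact ⟨m + n, by rw [hm, hn]; push_cast; ring⟩

private lemma CongZ.intmul {x y : ℚ} (c : ℤ) (h : CongZ x y) :
    CongZ ((c : ℚ) * x) ((c : ℚ) * y) := by
  obtain ⟨m, hm⟩ := h
  exact ⟨c * m, by rw [hm]; push_cast; ring⟩

section lemmas

variable {A : Type*} [AddCommGroup A] (b : A → A → ℚ)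
    (hsymm : ∀ x y : A, b x y = b y x)
    (hbil : ∀ x y z : A, ∃ n : ℤ, b (x + y) z = b x z + b y z + n)

include hbil

private lemma bil_add_left (x y z : A) : CongZ (b (x + y) z) (b x z + b y z) := hbil x y z

private lemma bil_zero_left (y : A) : CongZ (b 0 y) 0 := by
  obtain ⟨n, hn⟩ := hbil 0 0 y
  simp only [add_zero] at hn
  exact ⟨-n, by push_cast; linarith⟩

private lemma bil_neg_left (x y : A) : CongZ (b (-x) y) (-(b x y)) := by
  obtain ⟨n, hn⟩ := hbil x (-x) y
  simp only [add_neg_cancel] at hn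
  obtain ⟨m, hm⟩ := bil_zero_left b hbil y
  exact ⟨m - n, by rw [hm] at hn; push_cast at hn ⊢; linarith⟩

private lemma bil_zsmul_left (n : ℤ) (x y : A) : CongZ (b (n • x) y) ((n : ℚ) * b x y) := by
  induction n using Int.induction_on with
  | zero => simpa using bil_zero_left b hbil y
  | succ n ih =>
      have h1 : ((n : ℤ) + 1) • x = (n : ℤ) • x + x := by rw [add_smul, one_smul]
      rw [h1]
      refine (bil_add_left b hbil _ _ _).trans ?_
      have := ih.add (CongZ.refl (b x y))
      refine this.trans ⟨0, by push_cast; ring⟩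
  | pred n ih =>
      have h1 : (-(n : ℤ) - 1) • x = (-(n : ℤ)) • x + (-x) := by
        rw [sub_smul, one_smul, sub_eq_add_neg]
      rw [h1]
      refine (bil_add_left b hbil _ _ _).trans ?_
      have := ih.add (bil_neg_left b hbil x y)
      refine this.trans ⟨0, by push_cast; ring⟩

private lemma bil_sub_left (x y z : A) : CongZ (b (x - y) z) (b x z - b y z) := by
  rw [sub_eq_add_neg]
  refine (bil_add_left b hbil _ _ _).trans ?_
  have := (CongZ.refl (b x z)).add (bil_neg_left b hbil y z)
  exact this.trans ⟨0, by ring⟩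

include hsymm

private lemma bil_add_right (x y z : A) : CongZ (b x (y + z)) (b x y + b x z) := by
  rw [hsymm x (y + z), hsymm x y, hsymm x z]
  exact bil_add_left b hbil y z x

end lemmas

/-- Abstraction of the function `P` of §6.3. `A` is the ambient group
(`H⁴(M)`), `b` is (a rational lift of) the `ℚ/ℤ`-valued torsion linking form
(bilinear and symmetric modulo `ℤ`, and preserved modulo `ℤ` by the
automorphisms), `d` is the even positive integer `d_π`, `p = p_M`, and
`k ∈ S_{d_π}` (so `p − d·k` is torsion).  With `t = F(k) − k` and
`P(F) = d²·b(t,t) − 2d·b(p − dk, t) mod 2d`, the function `P` is additive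
under composition: `P(F₁ ∘ F₀) ≡ P(F₀) + P(F₁) (mod 2d)`. -/
theorem P_additive_under_composition
    {A : Type*} [AddCommGroup A] (b : A → A → ℚ)
    (hsymm : ∀ x y : A, b x y = b y x)
    (hbil : ∀ x y z : A, ∃ n : ℤ, b (x + y) z = b x z + b y z + n)
    (d : ℤ) (hd : 0 < d) (hde : Even d) (p k : A)
    (hk : ∃ n : ℤ, n ≠ 0 ∧ n • (p - d • k) = 0)
    (F₀ F₁ : A ≃+ A)
    (hF₀p : F₀ p = p) (hF₁p : F₁ p = p)
    (hF₀b : ∀ x y : A, ∃ n : ℤ, b (F₀ x) (F₀ y) = b x y + n)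
    (hF₁b : ∀ x y : A, ∃ n : ℤ, b (F₁ x) (F₁ y) = b x y + n) :
    ∃ n : ℤ,
      ((d : ℚ) ^ 2 * b (F₁ (F₀ k) - k) (F₁ (F₀ k) - k)
          - 2 * d * b (p - d • k) (F₁ (F₀ k) - k))
        = ((d : ℚ) ^ 2 * b (F₀ k - k) (F₀ k - k)
            - 2 * d * b (p - d • k) (F₀ k - k))
          + ((d : ℚ) ^ 2 * b (F₁ k - k) (F₁ k - k)
              - 2 * d * b (p - d • k) (F₁ k - k))
          + 2 * d * n := by
  obtain ⟨e, he⟩ := hde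
  set t₀ : A := F₀ k - k with ht₀
  set t₁ : A := F₁ k - k with ht₁
  set q : A := p - d • k with hqdef
  set u : A := F₁.symm k with hu
  have ht : F₁ (F₀ k) - k = F₁ t₀ + t₁ := by
    rw [ht₀, ht₁, map_sub]; abel
  have hF₁u : F₁ u = k := F₁.apply_symm_apply k
  have hqF : F₁ (p - d • u) = q := by
    rw [map_sub, hF₁p, map_zsmul, hF₁u]
  have ht₁F : t₁ = F₁ (k - u) := by rw [map_sub, hF₁u, ht₁]
  -- c1 : b t t ≡ b t₀ t₀ + b t₁ t₁ + 2 b (F₁ t₀) t₁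
  have c1 : CongZ (b (F₁ t₀ + t₁) (F₁ t₀ + t₁))
      (b t₀ t₀ + b t₁ t₁ + 2 * b (F₁ t₀) t₁) := by
    refine (bil_add_left b hbil _ _ _).trans ?_
    have h1 : CongZ (b (F₁ t₀) (F₁ t₀ + t₁)) (b (F₁ t₀) (F₁ t₀) + b (F₁ t₀) t₁) :=
      bil_add_right b hsymm hbil _ _ _
    have h2 : CongZ (b t₁ (F₁ t₀ + t₁)) (b t₁ (F₁ t₀) + b t₁ t₁) :=
      bil_add_right b hsymm hbil _ _ _
    refine (h1.add h2).trans ?_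
    have h3 : CongZ (b (F₁ t₀) (F₁ t₀)) (b t₀ t₀) := hF₁b t₀ t₀
    have h4 : CongZ (b (F₁ t₀) (F₁ t₀) + b (F₁ t₀) t₁ + (b t₁ (F₁ t₀) + b t₁ t₁))
        (b t₀ t₀ + b t₁ t₁ + 2 * b (F₁ t₀) t₁) := by
      obtain ⟨m, hm⟩ := h3
      exact ⟨m, by rw [hm, hsymm t₁ (F₁ t₀)]; push_cast; ring⟩
    exact h4
  -- c2 : b q t ≡ b q t₀ + d * b (k - u) t₀ + b q t₁
  have c2 : CongZ (b q (F₁ t₀ + t₁)) (b q t₀ + (d : ℚ) * b (k - u) t₀ + b q t₁) := by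
    refine (bil_add_right b hsymm hbil _ _ _).trans ?_
    have h1 : CongZ (b q (F₁ t₀)) (b (p - d • u) t₀) := by
      have := hF₁b (p - d • u) t₀
      rw [hqF] at this
      exact this
    have h2 : p - d • u = q + d • (k - u) := by
      rw [hqdef, smul_sub]; abel
    have h3 : CongZ (b (p - d • u) t₀) (b q t₀ + (d : ℚ) * b (k - u) t₀) := by
      rw [h2]
      refine (bil_add_left b hbil _ _ _).trans ?_
      exact (CongZ.refl _).add (bil_zsmul_left b hbil d (k - u) t₀)
    exact ((h1.trans h3).add (CongZ.refl (b q t₁)))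
  -- c3 : b (F₁ t₀) t₁ ≡ b (k - u) t₀
  have c3 : CongZ (b (F₁ t₀) t₁) (b (k - u) t₀) := by
    rw [ht₁F]
    refine CongZ.trans (hF₁b t₀ (k - u)) ?_
    exact ⟨0, by rw [hsymm t₀ (k - u)]; push_cast; ring⟩
  obtain ⟨m₁, hm₁⟩ := c1
  obtain ⟨m₂, hm₂⟩ := c2
  obtain ⟨m₃, hm₃⟩ := c3
  refine ⟨e * m₁ + d * m₃ - m₂, ?_⟩
  rw [ht]
  have hce : (d : ℚ) = (e : ℚ) + (e : ℚ) := by exact_mod_cast congrArg (Int.cast : ℤ → ℚ) he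
  push_cast at hm₁ hm₂ hm₃ ⊢
  linear_combination (d : ℚ) ^ 2 * hm₁ - 2 * d * hm₂ + 2 * d ^ 2 * hm₃ +
    (d : ℚ) * (m₁ : ℚ) * hce
end
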